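/- arXiv:1502.05463 — 2 statements merged into one kernel-verified Lean document; each statement's English description precedes it below -/
import Mathlib

section
/- ∫_0^∞ ∫_0^∞ x y³ / (1 + x² + y² + x² y² + x⁴)^4 dx dy = (9 − √3 π)/324. -/
open MeasureTheory Real Filter


lemma inner_int (x : ℝ) (hx : 0 < x) :
    ∫ y in Set.Ioi (0:ℝ), x * y ^ 3 / (1 + x ^ 2 + y ^ 2 + x ^ 2 * y ^ 2 + x ^ 4) ^ 4
      = x / (12 * (1 + x ^ 2) ^ 2 * (1 + x ^ 2 + x ^ 4) ^ 2) := by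
  set a : ℝ := 1 + x ^ 2 + x ^ 4 with ha
  set b : ℝ := 1 + x ^ 2 with hb
  have hapos : 0 < a := by positivity
  have hbpos : 0 < b := by positivity
  set G : ℝ → ℝ := fun y =>
    x * (a / (3 * (a + b * y ^ 2) ^ 3) - 1 / (2 * (a + b * y ^ 2) ^ 2)) / (2 * b ^ 2) with hG
  have hDpos : ∀ y : ℝ, 0 < a + b * y ^ 2 := fun y => by positivity
  have hderiv : ∀ y ∈ Set.Ici (0:ℝ), HasDerivAt G
      (x * y ^ 3 / (1 + x ^ 2 + y ^ 2 + x ^ 2 * y ^ 2 + x ^ 4) ^ 4) y := by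
    intro y _
    have hD : HasDerivAt (fun y : ℝ => a + b * y ^ 2) (b * (2 * y)) y := by
      simpa using ((hasDerivAt_pow 2 y).const_mul b).const_add a
    have h1 : HasDerivAt (fun y : ℝ => a / (3 * (a + b * y ^ 2) ^ 3))
        ((0 * (3 * (a + b * y ^ 2) ^ 3) - a * (3 * (3 * (a + b * y ^ 2) ^ 2 * (b * (2 * y)))))
          / (3 * (a + b * y ^ 2) ^ 3) ^ 2) y := by
      exact (hasDerivAt_const y a).div (((hD.pow 3).const_mul 3)) (by positivity)
    have h2 : HasDerivAt (fun y : ℝ => 1 / (2 * (a + b * y ^ 2) ^ 2))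
        ((0 * (2 * (a + b * y ^ 2) ^ 2) - 1 * (2 * (2 * (a + b * y ^ 2) ^ 1 * (b * (2 * y)))))
          / (2 * (a + b * y ^ 2) ^ 2) ^ 2) y := by
      exact (hasDerivAt_const y 1).div (((hD.pow 2).const_mul 2)) (by positivity)
    have := (((h1.sub h2).const_mul x).div_const (2 * b ^ 2))
    refine this.congr_deriv ?_
    have hDny := (hDpos y).ne'
    have : (1 : ℝ) + x ^ 2 + y ^ 2 + x ^ 2 * y ^ 2 + x ^ 4 = a + b * y ^ 2 := by
      rw [ha, hb]; ring
    rw [this]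
    field_simp
    ring
  have hnonneg : ∀ y ∈ Set.Ioi (0:ℝ),
      0 ≤ x * y ^ 3 / (1 + x ^ 2 + y ^ 2 + x ^ 2 * y ^ 2 + x ^ 4) ^ 4 := by
    intro y hy
    have : (0:ℝ) < y := hy
    positivity
  have htend : Tendsto G atTop (nhds 0) := by
    have hDtop : Tendsto (fun y : ℝ => a + b * y ^ 2) atTop atTop := by
      apply tendsto_atTop_add_const_left
      exact (tendsto_pow_atTop two_ne_zero).const_mul_atTop hbpos
    have t1 : Tendsto (fun y : ℝ => a / (3 * (a + b * y ^ 2) ^ 3)) atTop (nhds 0) :=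
      tendsto_const_nhds.div_atTop (((tendsto_pow_atTop three_ne_zero).comp hDtop).const_mul_atTop (by norm_num))
    have t2 : Tendsto (fun y : ℝ => 1 / (2 * (a + b * y ^ 2) ^ 2)) atTop (nhds 0) :=
      tendsto_const_nhds.div_atTop (((tendsto_pow_atTop two_ne_zero).comp hDtop).const_mul_atTop (by norm_num))
    have h := ((t1.sub t2).const_mul x).div_const (2 * b ^ 2)
    convert h using 2
    ring
  rw [MeasureTheory.integral_Ioi_of_hasDerivAt_of_nonneg' hderiv hnonneg htend]
  rw [hG]
  simp only
  field_simp
  ring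


theorem outer_int :
    ∫ x in Set.Ioi (0:ℝ), x / (12 * (1 + x ^ 2) ^ 2 * (1 + x ^ 2 + x ^ 4) ^ 2)
      = (9 - Real.sqrt 3 * Real.pi) / 324 := by
  set s : ℝ := Real.sqrt 3 with hs
  have hspos : 0 < s := Real.sqrt_pos.mpr (by norm_num)
  have hs2 : s ^ 2 = 3 := Real.sq_sqrt (by norm_num)
  set F : ℝ → ℝ := fun x =>
    (2 * Real.log (1 + x ^ 2) - Real.log (1 + x ^ 2 + x ^ 4) - 1 / (1 + x ^ 2)
      + 1 / (2 * (1 + x ^ 2 + x ^ 4)) - (2 * x ^ 2 + 1) / (6 * (1 + x ^ 2 + x ^ 4))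
      - (2 * s / 9) * Real.arctan ((2 * x ^ 2 + 1) / s)) / 24 with hF
  have hu1 : ∀ x : ℝ, (0:ℝ) < 1 + x ^ 2 := fun x => by positivity
  have hu2 : ∀ x : ℝ, (0:ℝ) < 1 + x ^ 2 + x ^ 4 := fun x => by positivity
  have hderiv : ∀ x ∈ Set.Ici (0:ℝ), HasDerivAt F
      (x / (12 * (1 + x ^ 2) ^ 2 * (1 + x ^ 2 + x ^ 4) ^ 2)) x := by
    intro x _
    have d1 : HasDerivAt (fun x : ℝ => 1 + x ^ 2) (2 * x) x := by
      simpa using (hasDerivAt_pow 2 x).const_add 1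
    have d2 : HasDerivAt (fun x : ℝ => 1 + x ^ 2 + x ^ 4) (2 * x + 4 * x ^ 3) x := by
      exact (((hasDerivAt_pow 2 x).const_add 1).add (hasDerivAt_pow 4 x)).congr_deriv (by norm_num)
    have dl1 := (d1.log (hu1 x).ne').const_mul 2
    have dl2 := d2.log (hu2 x).ne'
    have dq1 := (hasDerivAt_const x (1:ℝ)).div d1 (hu1 x).ne'
    have dq2 := (hasDerivAt_const x (1:ℝ)).div (d2.const_mul 2) (by positivity)
    have dtop : HasDerivAt (fun x : ℝ => 2 * x ^ 2 + 1) (2 * (2 * x)) x := by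
      simpa using ((hasDerivAt_pow 2 x).const_mul 2).add_const 1
    have dq3 := dtop.div (d2.const_mul 6) (by positivity)
    have daff := dtop.div_const s
    have darc := (daff.arctan).const_mul (2 * s / 9)
    have := (((((dl1.sub dl2).sub dq1).add dq2).sub dq3).sub darc).div_const 24
    refine this.congr_deriv ?_
    have h1 := (hu1 x).ne'
    have h2 := (hu2 x).ne'
    field_simp
    rw [hs2]
    ring
  have hnonneg : ∀ x ∈ Set.Ioi (0:ℝ),
      0 ≤ x / (12 * (1 + x ^ 2) ^ 2 * (1 + x ^ 2 + x ^ 4) ^ 2) := by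
    intro x hx
    have : (0:ℝ) < x := hx
    positivity
  have hutop : Tendsto (fun x : ℝ => 1 + x ^ 2 + x ^ 4) atTop atTop :=
    tendsto_atTop_mono (fun x => by nlinarith [sq_nonneg (x^2), sq_nonneg x])
      (tendsto_pow_atTop two_ne_zero)
  have h1top : Tendsto (fun x : ℝ => 1 + x ^ 2) atTop atTop :=
    tendsto_atTop_mono (fun x => by nlinarith) (tendsto_pow_atTop two_ne_zero)
  have hinvsq : Tendsto (fun x : ℝ => 1 / x ^ 2) atTop (nhds 0) :=
    tendsto_const_nhds.div_atTop (tendsto_pow_atTop two_ne_zero)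
  have hL : Tendsto (fun x : ℝ => 2 * Real.log (1 + x ^ 2) - Real.log (1 + x ^ 2 + x ^ 4))
      atTop (nhds 0) := by
    have hf : Tendsto (fun x : ℝ => x ^ 2 / (1 + x ^ 2 + x ^ 4)) atTop (nhds 0) := by
      apply squeeze_zero' (g := fun x : ℝ => 1 / x ^ 2)
      · filter_upwards with x; positivity
      · filter_upwards [eventually_ge_atTop (1:ℝ)] with x hx
        rw [div_le_div_iff₀ (hu2 x) (by positivity)]
        nlinarith
      · exact hinvsq
    have hr : Tendsto (fun x : ℝ => (1 + x ^ 2) ^ 2 / (1 + x ^ 2 + x ^ 4)) atTop (nhds 1) := by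
      have : (fun x : ℝ => (1 + x ^ 2) ^ 2 / (1 + x ^ 2 + x ^ 4))
          = fun x : ℝ => 1 + x ^ 2 / (1 + x ^ 2 + x ^ 4) := by
        funext x
        field_simp
        ring
      rw [this]
      simpa using tendsto_const_nhds.add hf
    have := (Real.continuousAt_log one_ne_zero).tendsto.comp hr
    rw [Real.log_one] at this
    apply this.congr
    intro x
    simp only [Function.comp_apply]
    rw [Real.log_div (by positivity) (hu2 x).ne', Real.log_pow]
    push_cast
    ring
  have hT1 : Tendsto (fun x : ℝ => 1 / (1 + x ^ 2)) atTop (nhds 0) :=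
    tendsto_const_nhds.div_atTop h1top
  have hT2 : Tendsto (fun x : ℝ => 1 / (2 * (1 + x ^ 2 + x ^ 4))) atTop (nhds 0) :=
    tendsto_const_nhds.div_atTop (hutop.const_mul_atTop (by norm_num))
  have hT3 : Tendsto (fun x : ℝ => (2 * x ^ 2 + 1) / (6 * (1 + x ^ 2 + x ^ 4))) atTop (nhds 0) := by
    apply squeeze_zero' (g := fun x : ℝ => 1 / x ^ 2)
    · filter_upwards with x; positivity
    · filter_upwards [eventually_ge_atTop (1:ℝ)] with x hx
      rw [div_le_div_iff₀ (by positivity) (by positivity)]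
      nlinarith
    · exact hinvsq
  have hT4 : Tendsto (fun x : ℝ => Real.arctan ((2 * x ^ 2 + 1) / s)) atTop (nhds (π / 2)) := by
    refine (Real.tendsto_arctan_atTop.mono_right nhdsWithin_le_nhds).comp ?_
    exact (tendsto_atTop_mono (fun x => by nlinarith) (tendsto_pow_atTop two_ne_zero)).atTop_div_const hspos
  have htend : Tendsto F atTop
      (nhds ((0 - 0 + 0 - 0 - (2 * s / 9) * (π / 2)) / 24)) := by
    have := (((((hL.sub hT1).add hT2).sub hT3).sub (hT4.const_mul (2 * s / 9))).div_const 24)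
    convert this using 2
  rw [MeasureTheory.integral_Ioi_of_hasDerivAt_of_nonneg' hderiv hnonneg htend]
  have harc : Real.arctan s⁻¹ = π / 6 := by
    rw [Real.arctan_inv_of_pos hspos]
    have : Real.arctan s = π / 3 := by
      rw [hs, ← Real.tan_pi_div_three]
      exact Real.arctan_tan (by linarith [Real.pi_pos]) (by linarith [Real.pi_pos])
    rw [this]
    ring
  rw [hF]
  simp only
  norm_num [Real.log_one, harc]
  ring

theorem quadrant_integral_15 :
    ∫ x in Set.Ioi (0:ℝ), ∫ y in Set.Ioi (0:ℝ), x * y ^ 3 / (1 + x ^ 2 + y ^ 2 + x ^ 2 * y ^ 2 + x ^ 4) ^ 4 = (9 - Real.sqrt 3 * Real.pi) / 324 := by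
  rw [MeasureTheory.setIntegral_congr_fun measurableSet_Ioi
    (fun x hx => inner_int x hx)]
  exact outer_int
end

section
/- ∫_0^∞ ∫_0^∞ x⁷ y / (1 + x² + y² + x² y² + x⁴)^4 dx dy = (−9 + 2√3 π)/648. -/
open MeasureTheory Real Filter Set Topology

noncomputable def Gaux (x : ℝ) : ℝ :=
  (1/12) * ((1/2) * (Real.log (1+x^2+x^4) - 2 * Real.log (1+x^2))
    + (Real.sqrt 3 / 9) * Real.arctan ((2*x^2+1)/Real.sqrt 3)
    + (4*x^2-1)/(6*(1+x^2+x^4)) + (x^2+2)/(6*(1+x^2+x^4)^2))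

lemma qpos (x : ℝ) : (0:ℝ) < 1+x^2+x^4 := by positivity

lemma inner_eval {x : ℝ} (hx : 0 < x) :
    ∫ y in Set.Ioi (0:ℝ), x ^ 7 * y / (1 + x ^ 2 + y ^ 2 + x ^ 2 * y ^ 2 + x ^ 4) ^ 4
      = x ^ 7 / (6 * (1+x^2) * (1+x^2+x^4)^3) := by
  have hB : (0:ℝ) < 1 + x^2 := by positivity
  set F : ℝ → ℝ := fun y => -(x^7) / (6*(1+x^2) * ((1+x^2)*y^2 + (1+x^2+x^4))^3) with hF
  have hD : ∀ y : ℝ, (0:ℝ) < (1+x^2)*y^2 + (1+x^2+x^4) := by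
    intro y; positivity
  have hderiv : ∀ y ∈ Set.Ici (0:ℝ), HasDerivAt F
      (x ^ 7 * y / (1 + x ^ 2 + y ^ 2 + x ^ 2 * y ^ 2 + x ^ 4) ^ 4) y := by
    intro y _
    have h1 : HasDerivAt (fun y : ℝ => (1+x^2)*y^2 + (1+x^2+x^4))
        ((1+x^2)*(2*y)) y := by
      simpa using (((hasDerivAt_pow 2 y).const_mul (1+x^2)).add_const (1+x^2+x^4))
    have h2 := (h1.pow 3)
    have hne : (6*(1+x^2) * ((1+x^2)*y^2 + (1+x^2+x^4))^3) ≠ 0 := by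
      have := hD y; positivity
    have h3 : HasDerivAt (fun y : ℝ => 6*(1+x^2) * ((1+x^2)*y^2 + (1+x^2+x^4))^3)
        (6*(1+x^2) * ((3:ℕ) * ((1+x^2)*y^2 + (1+x^2+x^4))^2 * ((1+x^2)*(2*y)))) y :=
      h2.const_mul _
    have h4 := (hasDerivAt_const y (-(x^7))).div h3 hne
    refine h4.congr_deriv ?_
    have hd := hD y
    have he : 1 + x ^ 2 + y ^ 2 + x ^ 2 * y ^ 2 + x ^ 4
        = (1+x^2)*y^2 + (1+x^2+x^4) := by ring
    rw [he]
    field_simp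
    ring
  have hnonneg : ∀ y ∈ Set.Ioi (0:ℝ),
      0 ≤ x ^ 7 * y / (1 + x ^ 2 + y ^ 2 + x ^ 2 * y ^ 2 + x ^ 4) ^ 4 := by
    intro y hy
    have hy' : 0 < y := hy
    positivity
  have htop : Tendsto F atTop (𝓝 0) := by
    have hDtop : Tendsto (fun y : ℝ => (1+x^2)*y^2 + (1+x^2+x^4)) atTop atTop := by
      apply tendsto_atTop_add_const_right
      exact (tendsto_pow_atTop (two_ne_zero)).const_mul_atTop hB
    have hcube : Tendsto (fun y : ℝ => 6*(1+x^2) * ((1+x^2)*y^2 + (1+x^2+x^4))^3)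
        atTop atTop := by
      apply Tendsto.const_mul_atTop (by positivity)
      exact ((tendsto_pow_atTop (three_ne_zero)).comp hDtop)
    simpa using (tendsto_const_nhds (x := -(x^7)) (f := atTop)).div_atTop hcube
  have key := integral_Ioi_of_hasDerivAt_of_nonneg' hderiv hnonneg htop
  rw [key]
  have hq := qpos x
  show 0 - (-(x^7) / (6*(1+x^2) * ((1+x^2)*(0:ℝ)^2 + (1+x^2+x^4))^3)) = _
  norm_num
  ring

lemma sqrt3_sq : Real.sqrt 3 ^ 2 = 3 := Real.sq_sqrt (by norm_num)

lemma sqrt3_pos : (0:ℝ) < Real.sqrt 3 := Real.sqrt_pos.mpr (by norm_num)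

lemma arctan_deriv (x : ℝ) :
    HasDerivAt (fun x : ℝ => (Real.sqrt 3 / 9) * Real.arctan ((2*x^2+1)/Real.sqrt 3))
      (x / (3*(1+x^2+x^4))) x := by
  have hs := sqrt3_pos
  have hu : HasDerivAt (fun x : ℝ => (2*x^2+1)/Real.sqrt 3)
      ((2*(2*x))/Real.sqrt 3) x := by
    simpa using ((((hasDerivAt_pow 2 x).const_mul 2).add_const 1).div_const (Real.sqrt 3))
  have h := (hu.arctan).const_mul (Real.sqrt 3 / 9)
  refine h.congr_deriv ?_
  have hq := qpos x
  have h3 := sqrt3_sq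
  have hden : 1 + ((2*x^2+1)/Real.sqrt 3)^2 = (3 + (2*x^2+1)^2)/3 := by
    rw [div_pow, h3]; ring
  rw [hden]
  have h33 : (3:ℝ) + (2*x^2+1)^2 = 4*(1+x^2+x^4) := by ring
  rw [h33]
  rw [div_div_eq_mul_div]
  field_simp
  nlinarith [sq_nonneg x, h3, hs, hq]

lemma Gaux_deriv (x : ℝ) :
    HasDerivAt Gaux (x ^ 7 / (6 * (1+x^2) * (1+x^2+x^4)^3)) x := by
  have hq := qpos x
  have hB : (0:ℝ) < 1 + x^2 := by positivity
  have hpoly : HasDerivAt (fun x : ℝ => 1+x^2+x^4) (2*x + 4*x^3) x := by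
    have := ((hasDerivAt_pow 2 x).const_add 1).add (hasDerivAt_pow 4 x)
    refine this.congr_deriv ?_
    ring_nf
  have hlog1 : HasDerivAt (fun x : ℝ => Real.log (1+x^2+x^4))
      ((2*x + 4*x^3)/(1+x^2+x^4)) x := hpoly.log hq.ne'
  have hpoly2 : HasDerivAt (fun x : ℝ => 1+x^2) (2*x) x := by
    simpa using ((hasDerivAt_pow 2 x).const_add 1)
  have hlog2 : HasDerivAt (fun x : ℝ => Real.log (1+x^2)) ((2*x)/(1+x^2)) x :=
    hpoly2.log hB.ne'
  have harct := arctan_deriv x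
  -- rational term 1
  have hd1 : HasDerivAt (fun x : ℝ => 6*(1+x^2+x^4)) (6*(2*x+4*x^3)) x :=
    hpoly.const_mul 6
  have hn1 : HasDerivAt (fun x : ℝ => 4*x^2-1) (4*(2*x)) x := by
    simpa using (((hasDerivAt_pow 2 x).const_mul 4).sub_const 1)
  have hr1 := hn1.div hd1 (by positivity)
  -- rational term 2
  have hd2 : HasDerivAt (fun x : ℝ => 6*(1+x^2+x^4)^2)
      (6*((2:ℕ)*(1+x^2+x^4)^1*(2*x+4*x^3))) x := (hpoly.pow 2).const_mul 6
  have hn2 : HasDerivAt (fun x : ℝ => x^2+2) (2*x) x := by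
    simpa using ((hasDerivAt_pow 2 x).add_const 2)
  have hr2 := hn2.div hd2 (by positivity)
  have htotal := ((((hlog1.sub (hlog2.const_mul 2)).const_mul (1/2)).add harct).add
      hr1).add hr2
  have hG := htotal.const_mul (1/12 : ℝ)
  refine hG.congr_deriv ?_
  field_simp
  ring

lemma sq_inv_tendsto : Tendsto (fun x : ℝ => 1/x^2) atTop (𝓝 0) := by
  simp only [one_div]
  exact tendsto_inv_atTop_zero.comp (tendsto_pow_atTop (by norm_num))

lemma Gaux_tendsto : Tendsto Gaux atTop (𝓝 (Real.sqrt 3 * Real.pi / 216)) := by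
  have hlog : Tendsto (fun x : ℝ => Real.log (1+x^2+x^4) - 2 * Real.log (1+x^2))
      atTop (𝓝 0) := by
    have hr : Tendsto (fun x : ℝ => x^2/(1+x^2)^2) atTop (𝓝 0) := by
      apply squeeze_zero' (g := fun x : ℝ => 1/x^2)
      · filter_upwards with x; positivity
      · filter_upwards [eventually_ge_atTop (1:ℝ)] with x hx
        rw [div_le_div_iff₀ (by positivity) (by positivity)]
        nlinarith
      · exact sq_inv_tendsto
    have h1 : Tendsto (fun x : ℝ => 1 - x^2/(1+x^2)^2) atTop (𝓝 1) := by
      simpa using tendsto_const_nhds.sub hr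
    have h2 : Tendsto (fun x : ℝ => Real.log (1 - x^2/(1+x^2)^2)) atTop (𝓝 0) := by
      have := ((Real.continuousAt_log (x := 1) one_ne_zero).tendsto).comp h1
      simpa [Function.comp_def] using this
    refine h2.congr fun x => ?_
    have hB : (0:ℝ) < 1 + x^2 := by positivity
    have hq := qpos x
    have he : 1 - x^2/(1+x^2)^2 = (1+x^2+x^4)/(1+x^2)^2 := by
      field_simp; ring
    rw [he, Real.log_div hq.ne' (by positivity), Real.log_pow]
    push_cast; ring
  have harct : Tendsto (fun x : ℝ => Real.arctan ((2*x^2+1)/Real.sqrt 3))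
      atTop (𝓝 (Real.pi/2)) := by
    have hin : Tendsto (fun x : ℝ => (2*x^2+1)/Real.sqrt 3) atTop atTop := by
      apply Tendsto.atTop_div_const sqrt3_pos
      apply tendsto_atTop_add_const_right
      exact (tendsto_pow_atTop (two_ne_zero)).const_mul_atTop (by norm_num)
    exact (tendsto_nhds_of_tendsto_nhdsWithin Real.tendsto_arctan_atTop).comp hin
  have hr1 : Tendsto (fun x : ℝ => (4*x^2-1)/(6*(1+x^2+x^4))) atTop (𝓝 0) := by
    apply squeeze_zero' (g := fun x : ℝ => 1/x^2)
    · filter_upwards [eventually_ge_atTop (1:ℝ)] with x hx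
      have hq := qpos x
      exact div_nonneg (by nlinarith) (by positivity)
    · filter_upwards [eventually_ge_atTop (1:ℝ)] with x hx
      have hq := qpos x
      rw [div_le_div_iff₀ (by positivity) (by positivity)]
      nlinarith [sq_nonneg x, sq_nonneg (x^2-1)]
    · exact sq_inv_tendsto
  have hr2 : Tendsto (fun x : ℝ => (x^2+2)/(6*(1+x^2+x^4)^2)) atTop (𝓝 0) := by
    apply squeeze_zero' (g := fun x : ℝ => 1/x^2)
    · filter_upwards with x
      have hq := qpos x; positivity
    · filter_upwards [eventually_ge_atTop (1:ℝ)] with x hx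
      have hq := qpos x
      rw [div_le_div_iff₀ (by positivity) (by positivity)]
      nlinarith [sq_nonneg x, sq_nonneg (x^2), sq_nonneg (x^4), sq_nonneg (x^3)]
    · exact sq_inv_tendsto
  have := ((((hlog.const_mul (1/2)).add (harct.const_mul (Real.sqrt 3 / 9))).add
      hr1).add hr2).const_mul (1/12 : ℝ)
  convert this using 2
  · rfl
  ring

lemma arctan_one_div_sqrt3 : Real.arctan (1 / Real.sqrt 3) = Real.pi / 6 := by
  rw [← Real.tan_pi_div_six]
  exact Real.arctan_tan (by linarith [Real.pi_pos]) (by linarith [Real.pi_pos])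

theorem quadrant_integral_18 :
    ∫ x in Set.Ioi (0:ℝ), ∫ y in Set.Ioi (0:ℝ), x ^ 7 * y / (1 + x ^ 2 + y ^ 2 + x ^ 2 * y ^ 2 + x ^ 4) ^ 4 = (-9 + 2 * Real.sqrt 3 * Real.pi) / 648 := by
  have hcongr : ∫ x in Set.Ioi (0:ℝ), ∫ y in Set.Ioi (0:ℝ),
      x ^ 7 * y / (1 + x ^ 2 + y ^ 2 + x ^ 2 * y ^ 2 + x ^ 4) ^ 4
      = ∫ x in Set.Ioi (0:ℝ), x ^ 7 / (6 * (1+x^2) * (1+x^2+x^4)^3) := by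
    apply setIntegral_congr_fun measurableSet_Ioi
    intro x hx
    exact inner_eval hx
  rw [hcongr]
  have hderiv : ∀ x ∈ Set.Ici (0:ℝ), HasDerivAt Gaux
      (x ^ 7 / (6 * (1+x^2) * (1+x^2+x^4)^3)) x := fun x _ => Gaux_deriv x
  have hnonneg : ∀ x ∈ Set.Ioi (0:ℝ),
      0 ≤ x ^ 7 / (6 * (1+x^2) * (1+x^2+x^4)^3) := by
    intro x hx
    have hx' : 0 < x := hx
    have hq := qpos x
    positivity
  have key := integral_Ioi_of_hasDerivAt_of_nonneg' hderiv hnonneg Gaux_tendsto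
  rw [key]
  have h0 : Gaux 0 = (1/12) * (Real.sqrt 3 / 9 * (Real.pi/6) + 1/6) := by
    unfold Gaux
    have h1 : (2*(0:ℝ)^2+1)/Real.sqrt 3 = 1/Real.sqrt 3 := by norm_num
    rw [h1, arctan_one_div_sqrt3]
    norm_num
    ring
  rw [h0]
  ring
end
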